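/- Let s be a fixed positive integer, 0 < p < 1/2, and let n be sufficiently large (depending on s). If Q is an n×n symmetric complex matrix that is good and (s−1)-saturated, then every linearly dependent set of rows of Q contains a non-expanding set of size at most s−1. -/

import Mathlib

open MeasureTheory Finset

attribute [local instance] Classical.propDecidable

set_option maxHeartbeats 800000

noncomputable section RankSparse

/-- Bernoulli measure on `Bool` with success probability `p`. -/
def bern (p : ℝ) : Measure Bool :=
  (Real.toNNReal p) • Measure.dirac true + (Real.toNNReal (1 - p)) • Measure.dirac false

instance (p : ℝ) : IsFiniteMeasure (bern p) := by unfold bern; infer_instance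

/-- Product measure: i.i.d. Bernoulli(p) entries indexed by pairs `(i,j)`. -/
def entriesMeasure (n : ℕ) (p : ℝ) : Measure (Fin n → Fin n → Bool) :=
  Measure.pi fun _ => Measure.pi fun _ => bern p

/-- The random sparsified symmetric matrix `Q(W,p)`: for `i ≤ j`,
`q_{ij} = w_{ij} ξ_{ij}` with `ξ_{ij}` Bernoulli, and `q_{ji} = q_{ij}`. -/
def QW {n : ℕ} (W : Matrix (Fin n) (Fin n) ℂ) (ω : Fin n → Fin n → Bool) :
    Matrix (Fin n) (Fin n) ℂ :=
  Matrix.of fun i j =>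
    if i ≤ j then (if ω i j then W i j else 0) else (if ω j i then W j i else 0)

/-- The adjacency relation of the graph `G(Q)` of a symmetric matrix:
`i` adjacent to `j` iff `q_{ij} ≠ 0` (self-loops allowed). -/
def adjOf {n : ℕ} (Q : Matrix (Fin n) (Fin n) ℂ) : Fin n → Fin n → Prop :=
  fun i j => Q i j ≠ 0

/-- The neighborhood `N(S)` of a vertex set: all vertices adjacent to at
least one vertex of `S` (may intersect `S`). -/
def nbr {n : ℕ} (A : Fin n → Fin n → Prop) (S : Finset (Fin n)) : Finset (Fin n) :=
  univ.filter fun v => ∃ u ∈ S, A u v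

/-- `S` is non-expanding if `|N(S)| < |S|`. -/
def nonExpanding {n : ℕ} (A : Fin n → Fin n → Prop) (S : Finset (Fin n)) : Prop :=
  (nbr A S).card < S.card

/-- Minimally non-expanding: non-expanding with no proper non-expanding subset. -/
def minNonExpanding {n : ℕ} (A : Fin n → Fin n → Prop) (S : Finset (Fin n)) : Prop :=
  nonExpanding A S ∧ ∀ T ⊂ S, ¬ nonExpanding A T

/-- Degree of a vertex: number of its neighbors (a loop makes `v` its own neighbor). -/
def deg {n : ℕ} (A : Fin n → Fin n → Prop) (v : Fin n) : ℕ :=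
  (univ.filter fun u => A v u).card

/-- A set is unobstructed if it contains no non-expanding subset. -/
def unobstructed {n : ℕ} (A : Fin n → Fin n → Prop) (S : Finset (Fin n)) : Prop :=
  ∀ T ⊆ S, ¬ nonExpanding A T

/-- A set is `t`-unobstructed if it contains no non-expanding subset of size at most `t`. -/
def tUnobstructed {n : ℕ} (t : ℕ) (A : Fin n → Fin n → Prop) (S : Finset (Fin n)) : Prop :=
  ∀ T ⊆ S, T.card ≤ t → ¬ nonExpanding A T

/-- Maximum size of an unobstructed vertex set. -/
def maxUnobstructed {n : ℕ} (A : Fin n → Fin n → Prop) : ℕ :=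
  ((univ : Finset (Finset (Fin n))).filter fun S => unobstructed A S).sup Finset.card

/-- Maximum size of a `t`-unobstructed vertex set. -/
def maxTUnobstructed {n : ℕ} (t : ℕ) (A : Fin n → Fin n → Prop) : ℕ :=
  ((univ : Finset (Finset (Fin n))).filter fun S => tUnobstructed t A S).sup Finset.card

/-- A symmetric matrix is `t`-saturated if its rank equals the maximum size of a
`t`-unobstructed set of vertices of its graph. -/
def saturated (t : ℕ) {n : ℕ} (Q : Matrix (Fin n) (Fin n) ℂ) : Prop :=
  Q.rank = maxTUnobstructed t (adjOf Q)

/-- `min_{S} (n - |S| + |N(S)|)` over all vertex subsets of `G(Q)`. -/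
def rankFormula {n : ℕ} (Q : Matrix (Fin n) (Fin n) ℂ) : ℕ :=
  (univ : Finset (Finset (Fin n))).inf' univ_nonempty
    fun S => n - S.card + (nbr (adjOf Q) S).card

/-- The induced graph on the vertex set `S` is connected. -/
def connOn {n : ℕ} (A : Fin n → Fin n → Prop) (S : Finset (Fin n)) : Prop :=
  ∀ u ∈ S, ∀ v ∈ S, Relation.ReflTransGen (fun a b => a ∈ S ∧ b ∈ S ∧ A a b) u v

/-- There is a cycle of length `ℓ` through `v` (a cycle of length 1 is a self-loop). -/
def cycleThrough {n : ℕ} (A : Fin n → Fin n → Prop) (ℓ : ℕ) (v : Fin n) : Prop :=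
  ∃ f : ZMod ℓ → Fin n, Function.Injective f ∧ (∀ i, A (f i) (f (i + 1))) ∧ ∃ i, f i = v

/-- Well-separated graph (for parameters `N`, the ambient size, and `s`):
(W1) every connected subgraph on at most `5s` vertices has at most `s-1` vertices of
degree at most `ln ln N`; (W2) no cycle of length 1 or of length between 3 and `12 s`
contains a vertex of degree at most `ln ln N`. -/
def wellSeparated (N s : ℕ) {n : ℕ} (A : Fin n → Fin n → Prop) : Prop :=
  (∀ S : Finset (Fin n), S.card ≤ 5 * s → connOn A S →
      (S.filter fun v => (deg A v : ℝ) ≤ Real.log (Real.log N)).card ≤ s - 1) ∧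
  (∀ v : Fin n, (deg A v : ℝ) ≤ Real.log (Real.log N) →
      ∀ ℓ : ℕ, (ℓ = 1 ∨ (3 ≤ ℓ ∧ ℓ ≤ 12 * s)) → ¬ cycleThrough A ℓ v)

/-- Number of edges joining `S` to its complement. -/
def crossEdges {n : ℕ} (A : Fin n → Fin n → Prop) (S : Finset (Fin n)) : ℕ :=
  (univ.filter fun e : Fin n × Fin n => e.1 ∈ S ∧ e.2 ∉ S ∧ A e.1 e.2).card

/-- Small set expander (for ambient size `N` and parameter `s`). -/
def smallSetExpander (N s : ℕ) {n : ℕ} (A : Fin n → Fin n → Prop) : Prop :=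
  ∀ S : Finset (Fin n), (S.card : ℝ) ≤ (N : ℝ) / (Real.log N) ^ ((3:ℝ)/2) →
    (S.card ≤ crossEdges A S ∨
      ∃ S' ⊆ S, S'.card ≤ s - 1 ∧ crossEdges A S' < S'.card)

/-- Number of edges induced on `S` (counting loops once). -/
def inducedEdges {n : ℕ} (A : Fin n → Fin n → Prop) (S : Finset (Fin n)) : ℕ :=
  (univ.filter fun e : Fin n × Fin n => e.1 ∈ S ∧ e.2 ∈ S ∧ e.1 ≤ e.2 ∧ A e.1 e.2).card

/-- Locally sparse: every nonempty set of at most `N/(ln N)^{3/2}` vertices induces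
fewer than `4|S|` edges (i.e. has average degree less than 8). -/
def locallySparse (N : ℕ) {n : ℕ} (A : Fin n → Fin n → Prop) : Prop :=
  ∀ S : Finset (Fin n), S.Nonempty → (S.card : ℝ) ≤ (N : ℝ) / (Real.log N) ^ ((3:ℝ)/2) →
    inducedEdges A S < 4 * S.card

/-- `S` is nice: at least two vertices are each adjacent to exactly one vertex of `S`. -/
def nice {n : ℕ} (A : Fin n → Fin n → Prop) (S : Finset (Fin n)) : Prop :=
  2 ≤ (univ.filter fun v => (S.filter fun u => A v u).card = 1).card

/-- `S` is nearly nice: at least one vertex is adjacent to exactly one vertex of `S`. -/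
def nearlyNice {n : ℕ} (A : Fin n → Fin n → Prop) (S : Finset (Fin n)) : Prop :=
  1 ≤ (univ.filter fun v => (S.filter fun u => A v u).card = 1).card

/-- A good graph (for ambient size `N`, parameter `s` and probability `p`; here
`k = ln ln N / (2p)`). -/
def goodGraph (N s : ℕ) (p : ℝ) {n : ℕ} (A : Fin n → Fin n → Prop) : Prop :=
  (∀ S : Finset (Fin n), S.Nonempty → ¬ nice A S → (∀ T ⊂ S, T.Nonempty → nice A T) →
      (Real.log (Real.log N) / (2 * p) + 1 ≤ (S.card : ℝ) ∨
        ∃ T ⊆ S, T.card ≤ s - 1 ∧ nonExpanding A T)) ∧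
  (∀ S : Finset (Fin n), S.Nonempty → ¬ nearlyNice A S →
      (∀ T ⊂ S, T.Nonempty → nearlyNice A T) →
      (Real.log (Real.log N) / (2 * p) + 1 ≤ (S.card : ℝ) ∨
        (S.card ≤ s - 1 ∧ nonExpanding A S))) ∧
  (((univ.filter fun v : Fin n => deg A v < s).card : ℝ) ≤ 1 / (p * Real.log N)) ∧
  wellSeparated N s A

/-- A symmetric matrix is good if its graph is good. -/
def goodMatrix (N s : ℕ) (p : ℝ) {n : ℕ} (Q : Matrix (Fin n) (Fin n) ℂ) : Prop :=
  goodGraph N s p (adjOf Q)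

/-- The upper-left `min m n × min m n` minor of a matrix. -/
def minor {n : ℕ} (Q : Matrix (Fin n) (Fin n) ℂ) (m : ℕ) :
    Matrix (Fin (min m n)) (Fin (min m n)) ℂ :=
  Q.submatrix (Fin.castLE (min_le_right m n)) (Fin.castLE (min_le_right m n))

end RankSparse


section Helpers

open Finset

variable {n : ℕ} (Q : Matrix (Fin n) (Fin n) ℂ)

/-- Linear independence of a finset of rows, in coefficient form. -/
lemma rows_indep_iff (B : Finset (Fin n)) :
    LinearIndependent ℂ (fun i : B => Q i) ↔
      ∀ c : Fin n → ℂ, ∑ i ∈ B, c i • Q i = 0 → ∀ i ∈ B, c i = 0 := by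
  classical
  rw [Fintype.linearIndependent_iff]
  constructor
  · intro h c hc i hi
    have hsum : ∑ i : B, c (i : Fin n) • Q (i : Fin n) = 0 := by
      rw [Finset.sum_coe_sort B (fun j => c j • Q j)]; exact hc
    exact h (fun i : B => c i) hsum ⟨i, hi⟩
  · intro h g hg i
    set c : Fin n → ℂ := fun j => if hj : j ∈ B then g ⟨j, hj⟩ else 0 with hcdef
    have hsum : ∑ j ∈ B, c j • Q j = 0 := by
      rw [← Finset.sum_coe_sort B (fun j => c j • Q j)]
      have he : ∀ j : B, c (j : Fin n) • Q (j : Fin n) = g j • Q (j : Fin n) := by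
        intro j; simp [hcdef, j.2]
      rw [Finset.sum_congr rfl (fun j _ => he j)]
      exact hg
    have := h c hsum i i.2
    simpa [hcdef, i.2] using this

lemma rows_indep_subset {T B : Finset (Fin n)} (hTB : T ⊆ B)
    (hB : LinearIndependent ℂ (fun i : B => Q i)) :
    LinearIndependent ℂ (fun i : T => Q i) := by
  classical
  rw [rows_indep_iff] at hB ⊢
  intro c hc i hi
  have hsum : ∑ j ∈ B, (if j ∈ T then c j else 0) • Q j = 0 := by
    have h1 : ∑ j ∈ T, (if j ∈ T then c j else 0) • Q j = ∑ j ∈ T, c j • Q j :=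
      Finset.sum_congr rfl (fun j hj => by rw [if_pos hj])
    have h2 : ∑ j ∈ B, (if j ∈ T then c j else 0) • Q j
        = ∑ j ∈ T, (if j ∈ T then c j else 0) • Q j :=
      (Finset.sum_subset hTB (fun x _ hx => by rw [if_neg hx, zero_smul])).symm
    rw [h2, h1, hc]
  have := hB _ hsum i (hTB hi)
  simpa [hi] using this

/-- The rows of a non-expanding set are linearly dependent. -/
lemma nonExpanding_dep {T : Finset (Fin n)} (hT : nonExpanding (adjOf Q) T) :
    ¬ LinearIndependent ℂ (fun i : T => Q i) := by
  classical
  intro hind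
  set Nb := nbr (adjOf Q) T with hNb
  have hg : LinearIndependent ℂ (fun i : T => fun j : Nb => Q (i : Fin n) (j : Fin n)) := by
    rw [Fintype.linearIndependent_iff]
    intro g hg0
    have hrow : ∑ i : T, g i • (Q (i : Fin n)) = 0 := by
      funext j
      rw [Finset.sum_apply]
      by_cases hj : j ∈ Nb
      · have := congrFun hg0 ⟨j, hj⟩
        rw [Finset.sum_apply] at this
        simpa using this
      · have hz : ∀ i : T, Q (i : Fin n) j = 0 := by
          intro i
          by_contra hne
          apply hj
          rw [hNb]
          exact Finset.mem_filter.mpr ⟨Finset.mem_univ _, ⟨i, i.2, hne⟩⟩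
        simp [hz]
    exact fun i => Fintype.linearIndependent_iff.mp hind g hrow i
  have hcard := hg.fintype_card_le_finrank
  rw [Module.finrank_pi, Fintype.card_coe, Fintype.card_coe] at hcard
  rw [nonExpanding, ← hNb] at hT
  omega

end Helpers

/-- for fixed positive integer `s`, `0 < p < 1/2` and `n`
sufficiently large (depending on `s`): if an `n × n` symmetric complex matrix
`Q` is good and `(s-1)`-saturated, then every linearly dependent set of rows of
`Q` contains a non-expanding set of size at most `s-1`. -/
theorem good_saturated_dependent (s : ℕ) (hs : 1 ≤ s) :
    ∃ N : ℕ, ∀ n ≥ N, ∀ p : ℝ, 0 < p → p < 1 / 2 →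
      ∀ Q : Matrix (Fin n) (Fin n) ℂ, Q.IsSymm →
        goodMatrix n s p Q → saturated (s - 1) Q →
        ∀ R : Finset (Fin n), ¬ LinearIndependent ℂ (fun i : R => Q i) →
          ∃ T ⊆ R, T.card ≤ s - 1 ∧ nonExpanding (adjOf Q) T := by
  classical
  use 100
  intro n hn p hp hp2 Q hsymm hgood hsat R hdep
  by_contra hcon
  push_neg at hcon
  -- minimal (by cardinality) dependent subset S of R
  obtain ⟨S, hSmem, hSmin⟩ := Finset.exists_min_image
      ((R.powerset).filter fun S : Finset (Fin n) => ¬ LinearIndependent ℂ (fun i : S => Q i))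
      Finset.card
      ⟨R, by rw [Finset.mem_filter, Finset.mem_powerset]; exact ⟨subset_rfl, hdep⟩⟩
  rw [Finset.mem_filter, Finset.mem_powerset] at hSmem
  obtain ⟨hSR, hSdep⟩ := hSmem
  have hproper : ∀ T : Finset (Fin n), T ⊂ S → LinearIndependent ℂ (fun i : T => Q i) := by
    intro T hT
    by_contra hTd
    have := hSmin T (by
      rw [Finset.mem_filter, Finset.mem_powerset]
      exact ⟨hT.subset.trans hSR, hTd⟩)
    exact absurd (Finset.card_lt_card hT) (not_lt.mpr this)
  rw [rows_indep_iff] at hSdep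
  push_neg at hSdep
  obtain ⟨c, hc0, i₀, hi₀S, hi₀⟩ := hSdep
  have hSne : S.Nonempty := ⟨i₀, hi₀S⟩
  -- the kernel combination has full support on S
  have hsupp : ∀ i ∈ S, c i ≠ 0 := by
    intro i hiS hci
    by_cases hii : i₀ = i
    · exact hi₀ (hii ▸ hci)
    · have herase : S.erase i ⊂ S := Finset.erase_ssubset hiS
      have hindep := hproper _ herase
      rw [rows_indep_iff] at hindep
      have hsum : ∑ j ∈ S.erase i, c j • Q j = 0 := by
        have haux := Finset.add_sum_erase S (fun j => c j • Q j) hiS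
        rw [hc0] at haux
        have hz : c i • Q i = 0 := by rw [hci, zero_smul]
        rw [hz, zero_add] at haux
        exact haux
      exact hi₀ (hindep c hsum i₀ (Finset.mem_erase.mpr ⟨hii, hi₀S⟩))
  -- S is not nearly nice
  have hnn : ¬ nearlyNice (adjOf Q) S := by
    intro hnice
    rw [nearlyNice] at hnice
    obtain ⟨w, hw⟩ := Finset.card_pos.mp (lt_of_lt_of_le zero_lt_one hnice)
    rw [Finset.mem_filter] at hw
    obtain ⟨-, hw1⟩ := hw
    obtain ⟨u₀, hu₀⟩ := Finset.card_eq_one.mp hw1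
    have hu₀mem : u₀ ∈ S.filter (fun u => adjOf Q w u) := hu₀ ▸ Finset.mem_singleton_self u₀
    rw [Finset.mem_filter] at hu₀mem
    obtain ⟨hu₀S, hu₀adj⟩ := hu₀mem
    have heval := congrFun hc0 w
    rw [Finset.sum_apply] at heval
    have hterm : ∀ j ∈ S, (c j • Q j) w = if j = u₀ then c u₀ * Q u₀ w else 0 := by
      intro j hjS
      by_cases hj : j = u₀
      · subst hj; simp
      · have hadj : ¬ adjOf Q w j := by
          intro hadj
          have : j ∈ S.filter (fun u => adjOf Q w u) := Finset.mem_filter.mpr ⟨hjS, hadj⟩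
          rw [hu₀] at this
          exact hj (Finset.mem_singleton.mp this)
        have hQ0 : Q j w = 0 := by
          have := hsymm.apply w j
          -- this : Q j w = Q w j
          rw [this]
          by_contra hne
          exact hadj hne
        simp [hj, hQ0]
    rw [Finset.sum_congr rfl hterm, Finset.sum_ite_eq' S u₀ (fun _ => c u₀ * Q u₀ w),
      if_pos hu₀S] at heval
    have hQu₀ : Q u₀ w ≠ 0 := by
      have := hsymm.apply w u₀
      rw [this]; exact hu₀adj
    have : c u₀ * Q u₀ w ≠ 0 := mul_ne_zero (hsupp u₀ hu₀S) hQu₀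
    exact this (by simpa using heval)
  -- minimal non-nearly-nice subset T₀ of S
  obtain ⟨T₀, hT₀mem, hT₀min⟩ := Finset.exists_min_image
      ((S.powerset).filter fun T => T.Nonempty ∧ ¬ nearlyNice (adjOf Q) T) Finset.card
      ⟨S, by rw [Finset.mem_filter, Finset.mem_powerset]; exact ⟨subset_rfl, hSne, hnn⟩⟩
  rw [Finset.mem_filter, Finset.mem_powerset] at hT₀mem
  obtain ⟨hT₀S, hT₀ne, hT₀nn⟩ := hT₀mem
  have hT₀min' : ∀ T ⊂ T₀, T.Nonempty → nearlyNice (adjOf Q) T := by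
    intro T hT hTne
    by_contra h
    have := hT₀min T (by
      rw [Finset.mem_filter, Finset.mem_powerset]
      exact ⟨hT.subset.trans hT₀S, hTne, h⟩)
    exact absurd (Finset.card_lt_card hT) (not_lt.mpr this)
  unfold goodMatrix goodGraph at hgood
  obtain ⟨h1, h2, h3, h4⟩ := hgood
  rcases h2 T₀ hT₀ne hT₀nn hT₀min' with hbig | ⟨hsmall, hne⟩
  swap
  · exact hcon T₀ (hT₀S.trans hSR) hsmall hne
  -- big case: show every vertex of S has degree < s
  have hdeg : ∀ v ∈ S, deg (adjOf Q) v < s := by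
    intro v hvS
    set 𝔅 := (univ : Finset (Finset (Fin n))).filter
        (fun B => S.erase v ⊆ B ∧ LinearIndependent ℂ (fun i : B => Q i)) with h𝔅
    have h𝔅ne : 𝔅.Nonempty :=
      ⟨S.erase v, Finset.mem_filter.mpr
        ⟨Finset.mem_univ _, subset_rfl, hproper _ (Finset.erase_ssubset hvS)⟩⟩
    obtain ⟨B, hBmem, hBmax⟩ := Finset.exists_max_image 𝔅 Finset.card h𝔅ne
    rw [h𝔅, Finset.mem_filter] at hBmem
    obtain ⟨-, hevB, hBind⟩ := hBmem
    have hvB : v ∉ B := by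
      intro hvB
      have hSB : S ⊆ B := by
        intro x hx
        by_cases hxv : x = v
        · subst hxv; exact hvB
        · exact hevB (Finset.mem_erase.mpr ⟨hxv, hx⟩)
      have hind := rows_indep_subset Q hSB hBind
      rw [rows_indep_iff] at hind
      exact hi₀ (hind c hc0 i₀ hi₀S)
    -- all rows lie in the span of the rows of B
    have hspan : ∀ i : Fin n, Q i ∈ Submodule.span ℂ ((fun j => Q j) '' (B : Set (Fin n))) := by
      intro i
      by_contra hns
      have hiB : i ∉ B := fun h =>
        hns (Submodule.subset_span (Set.mem_image_of_mem _ h))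
      by_cases hiv : i = v
      · -- row v is in the span of the rows of S.erase v ⊆ B
        subst hiv
        apply hns
        have haux := Finset.add_sum_erase S (fun j => c j • Q j) hvS
        rw [hc0] at haux
        have hsum : c i • Q i = - ∑ j ∈ S.erase i, c j • Q j :=
          eq_neg_of_add_eq_zero_left haux
        have hmem : (∑ j ∈ S.erase i, c j • Q j)
            ∈ Submodule.span ℂ ((fun j => Q j) '' (B : Set (Fin n))) :=
          Submodule.sum_mem _ fun j hj => Submodule.smul_mem _ _
            (Submodule.subset_span (Set.mem_image_of_mem _ (hevB hj)))
        have hQi : Q i = (c i)⁻¹ • (c i • Q i) := by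
          rw [smul_smul, inv_mul_cancel₀ (hsupp i hvS), one_smul]
        rw [hQi, hsum]
        exact Submodule.smul_mem _ _ (Submodule.neg_mem _ hmem)
      · -- otherwise B ∪ {i} would be a larger independent set
        have hBind' : LinearIndependent ℂ (fun j : (insert i B : Finset (Fin n)) => Q j) := by
          rw [rows_indep_iff]
          intro d hd j hj
          rw [Finset.sum_insert hiB] at hd
          have hdi : d i = 0 := by
            by_contra hdi
            apply hns
            have hQi : Q i = (-(d i)⁻¹) • ∑ j ∈ B, d j • Q j := by
              have h' : d i • Q i = - ∑ j ∈ B, d j • Q j := by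
                rw [eq_neg_iff_add_eq_zero]; exact hd
              calc Q i = (d i)⁻¹ • (d i • Q i) := by
                    rw [smul_smul, inv_mul_cancel₀ hdi, one_smul]
                _ = (-(d i)⁻¹) • ∑ j ∈ B, d j • Q j := by rw [h', smul_neg, neg_smul]
            rw [hQi]
            exact Submodule.smul_mem _ _ (Submodule.sum_mem _ fun j hj =>
              Submodule.smul_mem _ _ (Submodule.subset_span (Set.mem_image_of_mem _ hj)))
          rw [Finset.mem_insert] at hj
          rcases hj with hj | hj
          · subst hj; exact hdi
          · rw [hdi, zero_smul, zero_add] at hd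
            exact (rows_indep_iff Q B).mp hBind d hd j hj
        have hmem' : insert i B ∈ 𝔅 := by
          rw [h𝔅, Finset.mem_filter]
          exact ⟨Finset.mem_univ _, hevB.trans (Finset.subset_insert _ _), hBind'⟩
        have hcard := hBmax _ hmem'
        rw [Finset.card_insert_of_notMem hiB] at hcard
        omega
    -- rank Q ≤ |B|
    have hrank : Q.rank ≤ B.card := by
      have h2span : Submodule.span ℂ (Set.range Q)
          = Submodule.span ℂ ((fun j => Q j) '' (B : Set (Fin n))) := by
        apply le_antisymm
        · rw [Submodule.span_le]
          rintro x ⟨i, rfl⟩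
          exact hspan i
        · apply Submodule.span_mono
          rintro x ⟨j, _, rfl⟩
          exact ⟨j, rfl⟩
      rw [Matrix.rank_eq_finrank_span_row, show Q.row = Q from rfl, h2span]
      have himg : (fun j => Q j) '' (B : Set (Fin n)) = ↑(B.image fun j => Q j) := by
        rw [Finset.coe_image]
      rw [himg]
      exact le_trans (finrank_span_finset_le_card _) Finset.card_image_le
    -- insert v B is too big to be (s-1)-unobstructed
    have hnotunob : ¬ tUnobstructed (s - 1) (adjOf Q) (insert v B) := by
      intro hunob
      have hle : (insert v B).card ≤ maxTUnobstructed (s - 1) (adjOf Q) :=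
        Finset.le_sup (f := Finset.card)
          (Finset.mem_filter.mpr ⟨Finset.mem_univ _, hunob⟩)
      rw [Finset.card_insert_of_notMem hvB, ← hsat] at hle
      omega
    rw [tUnobstructed] at hnotunob
    push_neg at hnotunob
    obtain ⟨T, hTsub, hTcard, hTne'⟩ := hnotunob
    have hvT : v ∈ T := by
      by_contra hvT
      have hTB : T ⊆ B := fun x hx =>
        (Finset.mem_insert.mp (hTsub hx)).resolve_left (fun h => hvT (h ▸ hx))
      exact nonExpanding_dep Q hTne' (rows_indep_subset Q hTB hBind)
    have hsubnbr : Finset.filter (fun u => adjOf Q v u) univ ⊆ nbr (adjOf Q) T := by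
      intro u hu
      rw [Finset.mem_filter] at hu
      exact Finset.mem_filter.mpr ⟨Finset.mem_univ _, v, hvT, hu.2⟩
    have hdegle : deg (adjOf Q) v ≤ (nbr (adjOf Q) T).card := Finset.card_le_card hsubnbr
    rw [nonExpanding] at hTne'
    omega
  -- counting small-degree vertices
  have hScount : S ⊆ univ.filter (fun v => deg (adjOf Q) v < s) := fun v hv =>
    Finset.mem_filter.mpr ⟨Finset.mem_univ _, hdeg v hv⟩
  have hS_le : (S.card : ℝ) ≤ 1 / (p * Real.log n) := by
    refine le_trans ?_ h3
    exact_mod_cast Finset.card_le_card hScount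
  have hT₀_le : (T₀.card : ℝ) ≤ (S.card : ℝ) := by
    exact_mod_cast Finset.card_le_card hT₀S
  have hfinal : Real.log (Real.log n) / (2 * p) + 1 ≤ 1 / (p * Real.log n) :=
    le_trans hbig (le_trans hT₀_le hS_le)
  -- numeric contradiction for n ≥ 100
  have hn' : (100 : ℝ) ≤ (n : ℝ) := by exact_mod_cast hn
  have he : Real.exp 1 ≤ 2.7182818286 := le_of_lt Real.exp_one_lt_d9
  have hexp4 : Real.exp 4 ≤ 100 := by
    have h4 : Real.exp 4 = Real.exp 1 ^ (4 : ℕ) := by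
      rw [← Real.exp_nat_mul]; norm_num
    rw [h4]
    calc Real.exp 1 ^ (4 : ℕ) ≤ (2.7182818286 : ℝ) ^ (4 : ℕ) :=
          pow_le_pow_left₀ (Real.exp_pos 1).le he 4
      _ ≤ 100 := by norm_num
  have hlog4 : (4 : ℝ) ≤ Real.log n := by
    have h100 : (4 : ℝ) ≤ Real.log 100 :=
      (Real.le_log_iff_exp_le (by norm_num)).mpr hexp4
    exact le_trans h100 (Real.log_le_log (by norm_num) hn')
  have hloglog : (1 : ℝ) ≤ Real.log (Real.log n) := by
    have hexp1 : Real.exp 1 ≤ 4 := by nlinarith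
    have h4 : (1 : ℝ) ≤ Real.log 4 := (Real.le_log_iff_exp_le (by norm_num)).mpr hexp1
    exact le_trans h4 (Real.log_le_log (by norm_num) hlog4)
  have hlogpos : (0 : ℝ) < Real.log n := by linarith
  have hp0 : p ≠ 0 := ne_of_gt hp
  have hkey := mul_le_mul_of_nonneg_right hfinal (le_of_lt (mul_pos hp hlogpos))
  have e1 : (Real.log (Real.log n) / (2 * p) + 1) * (p * Real.log n)
      = Real.log (Real.log n) * Real.log n / 2 + p * Real.log n := by
    field_simp
  have e2 : 1 / (p * Real.log n) * (p * Real.log n) = 1 := by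
    field_simp
  rw [e1, e2] at hkey
  have h44 : (4 : ℝ) ≤ Real.log (Real.log n) * Real.log n := by nlinarith
  nlinarith [mul_pos hp hlogpos]
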